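/- Let K ≥ 1, let t range over ℝ, let α_j(n,t) (with γ(n,t) := α_{−1}(n,t)) be recursion coefficients depending on t with γ(n,t) ≠ 0 for all n, t, and let U_j(n,t) ∈ ℂ be given for 0 ≤ j ≤ K, n ∈ ℤ. Let ψ_n(x,t) (n ∈ ℤ) be complex-valued families, differentiable in t, satisfying for all n ∈ ℤ, x ∈ ℂ, t: x·ψ_n(x,t) = Σ_{j=−1}^{d2} α_j(n,t)·ψ_{n−j}(x,t) and ∂_t ψ_n(x,t) = Σ_{j=0}^{K} U_j(n,t)·ψ_{n+j}(x,t). Then for every N ∈ ℤ the window column vector Ψ_N(x,t) := (ψ_{N−d2}(x,t), …, ψ_N(x,t))ᵗ satisfies the folded deformation equation ∂_t Ψ_N(x,t) = 𝐔_K^N(x,t)·Ψ_N(x,t). -/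
import Mathlib


open Matrix BigOperators

noncomputable def aMat (d2 : ℕ) (α : ℤ → ℤ → ℂ) (γ : ℤ → ℂ) (N : ℤ) (x : ℂ) :
    Matrix (Fin (d2 + 1)) (Fin (d2 + 1)) ℂ :=
  Matrix.of fun i b =>
    if (i : ℕ) < d2 then (if (b : ℕ) = (i : ℕ) + 1 then 1 else 0)
    else if (b : ℕ) = d2 then (x - α 0 N) / γ N
    else -α ((d2 : ℤ) - ((b : ℕ) : ℤ)) N / γ N

noncomputable def aProd (d2 : ℕ) (α : ℤ → ℤ → ℂ) (γ : ℤ → ℂ) (N : ℤ) (x : ℂ) :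
    ℕ → Matrix (Fin (d2 + 1)) (Fin (d2 + 1)) ℂ
  | 0 => 1
  | j + 1 => aMat d2 α γ (N + (j : ℤ)) x * aProd d2 α γ N x j

noncomputable def UKNMat (d2 K : ℕ) (α : ℤ → ℤ → ℝ → ℂ) (γ : ℤ → ℝ → ℂ)
    (U : ℤ → ℤ → ℝ → ℂ) (N : ℤ) (x : ℂ) (t : ℝ) :
    Matrix (Fin (d2 + 1)) (Fin (d2 + 1)) ℂ :=
  ∑ j ∈ Finset.Icc 0 K,
    Matrix.diagonal (fun i : Fin _ => U (j : ℤ) (N - (d2 : ℤ) + ((i : ℕ) : ℤ)) t)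
      * aProd d2 (fun a b => α a b t) (fun n => γ n t) N x j

lemma sum_mulVec_aux {n : Type*} [Fintype n] (s : Finset ℕ)
    (A : ℕ → Matrix n n ℂ) (v : n → ℂ) :
    (∑ j ∈ s, A j).mulVec v = ∑ j ∈ s, (A j).mulVec v := by
  funext i
  simp only [Matrix.mulVec, dotProduct, Matrix.sum_apply, Finset.sum_apply, Finset.sum_mul]
  rw [Finset.sum_comm]

lemma aProd_mulVec (d2 : ℕ) (α : ℤ → ℤ → ℂ) (γ : ℤ → ℂ) (hγ : ∀ n, γ n ≠ 0)
    (x : ℂ) (ψ : ℤ → ℂ)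
    (hrec : ∀ n : ℤ, x * ψ n = γ n * ψ (n + 1) +
      ∑ b : Fin (d2 + 1), α ((d2 : ℤ) - ((b : ℕ) : ℤ)) n * ψ (n - (d2 : ℤ) + (b : ℕ)))
    (N : ℤ) (j : ℕ) :
    (aProd d2 α γ N x j).mulVec (fun i : Fin (d2 + 1) => ψ (N - (d2 : ℤ) + ((i : ℕ) : ℤ))) =
      fun i : Fin (d2 + 1) => ψ (N - (d2 : ℤ) + ((i : ℕ) : ℤ) + (j : ℤ)) := by
  induction j with
  | zero => simp [aProd]
  | succ j ih =>
    rw [show aProd d2 α γ N x (j + 1) = aMat d2 α γ (N + (j : ℤ)) x * aProd d2 α γ N x j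
        from rfl, ← Matrix.mulVec_mulVec, ih]
    funext i
    show ∑ b : Fin (d2 + 1), aMat d2 α γ (N + (j : ℤ)) x i b *
        ψ (N - (d2 : ℤ) + ((b : ℕ) : ℤ) + (j : ℤ)) = _
    by_cases hi : (i : ℕ) < d2
    · rw [Finset.sum_eq_single (⟨(i : ℕ) + 1, by omega⟩ : Fin (d2 + 1))]
      · simp only [aMat, Matrix.of_apply, if_pos hi]
        norm_num
        congr 1
        push_cast
        ring
      · intro b _ hb
        have hb' : (b : ℕ) ≠ (i : ℕ) + 1 := fun h => hb (Fin.ext h)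
        simp [aMat, hi, hb']
      · simp
    · have hi' : (i : ℕ) = d2 := by omega
      have key := hrec (N + (j : ℤ))
      have hentry : ∀ b : Fin (d2 + 1),
          aMat d2 α γ (N + (j : ℤ)) x i b * ψ (N - (d2 : ℤ) + ((b : ℕ) : ℤ) + (j : ℤ))
          = (if (b : ℕ) = d2 then x / γ (N + (j : ℤ)) *
                ψ (N - (d2 : ℤ) + ((b : ℕ) : ℤ) + (j : ℤ)) else 0)
            + (- (α ((d2 : ℤ) - ((b : ℕ) : ℤ)) (N + (j : ℤ)) *
                ψ ((N + (j : ℤ)) - (d2 : ℤ) + ((b : ℕ) : ℤ))) / γ (N + (j : ℤ))) := by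
        intro b
        have harg : N - (d2 : ℤ) + ((b : ℕ) : ℤ) + (j : ℤ)
            = (N + (j : ℤ)) - (d2 : ℤ) + ((b : ℕ) : ℤ) := by ring
        by_cases hb : (b : ℕ) = d2
        · simp only [aMat, Matrix.of_apply, if_neg hi, if_pos hb, harg, hb]
          push_cast
          rw [sub_self]
          ring
        · simp only [aMat, Matrix.of_apply, if_neg hi, if_neg hb, harg]
          ring
      rw [Finset.sum_congr rfl (fun b _ => hentry b), Finset.sum_add_distrib]
      rw [Finset.sum_eq_single (⟨d2, lt_add_one d2⟩ : Fin (d2 + 1))]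
      · rw [← Finset.sum_div]
        have h1 : N - (d2 : ℤ) + ((d2 : ℕ) : ℤ) + (j : ℤ) = N + (j : ℤ) := by push_cast; ring
        have h2 : N - (d2 : ℤ) + ((i : ℕ) : ℤ) + ((j + 1 : ℕ) : ℤ) = N + (j : ℤ) + 1 := by
          rw [hi']; push_cast; ring
        simp only [Finset.sum_neg_distrib, Fin.val_mk, if_pos rfl, h1, h2, if_true]
        rw [div_mul_eq_mul_div, neg_div, ← sub_eq_add_neg, div_sub_div_same, div_eq_iff (hγ _)]
        linear_combination key
      · intro b _ hb
        have hb' : (b : ℕ) ≠ d2 := fun h => hb (Fin.ext h)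
        simp [hb']
      · simp
    
/-- The window `Ψ_N` satisfies the folded deformation equation
`∂ₜ Ψ_N = 𝐔_K^N · Ψ_N`. -/
theorem window_deformation_system_Psi (d1 d2 K : ℕ)
    (hd1 : 1 ≤ d1) (hd2 : 1 ≤ d2) (hK : 1 ≤ K)
    (α : ℤ → ℤ → ℝ → ℂ) (γ : ℤ → ℝ → ℂ) (U : ℤ → ℤ → ℝ → ℂ)
    (hαsupp : ∀ (j n : ℤ) (t : ℝ), (j < -1 ∨ (d2 : ℤ) < j) → α j n t = 0)
    (hαγ : ∀ (n : ℤ) (t : ℝ), α (-1) n t = γ n t)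
    (hγ : ∀ (n : ℤ) (t : ℝ), γ n t ≠ 0)
    (hUsupp : ∀ (j n : ℤ) (t : ℝ), (j < 0 ∨ (K : ℤ) < j) → U j n t = 0)
    (ψ : ℤ → ℂ → ℝ → ℂ)
    (hψdiff : ∀ (n : ℤ) (x : ℂ), Differentiable ℝ (ψ n x))
    (hrec : ∀ (n : ℤ) (x : ℂ) (t : ℝ),
      x * ψ n x t = ∑ j ∈ Finset.Icc (-1 : ℤ) (d2 : ℤ), α j n t * ψ (n - j) x t)
    (hdef : ∀ (n : ℤ) (x : ℂ) (t : ℝ),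
      deriv (ψ n x) t = ∑ j ∈ Finset.Icc (0 : ℤ) (K : ℤ), U j n t * ψ (n + j) x t)
    (N : ℤ) (x : ℂ) (t : ℝ) :
    (fun i : Fin (d2 + 1) => deriv (ψ (N - (d2 : ℤ) + ((i : ℕ) : ℤ)) x) t) =
      (UKNMat d2 K α γ U N x t).mulVec
        (fun i : Fin (d2 + 1) => ψ (N - (d2 : ℤ) + ((i : ℕ) : ℤ)) x t) := by
  -- derived single-step recursion
  have hrec' : ∀ m : ℤ, x * ψ m x t = γ m t * ψ (m + 1) x t +
      ∑ b : Fin (d2 + 1), α ((d2 : ℤ) - ((b : ℕ) : ℤ)) m t * ψ (m - (d2 : ℤ) + (b : ℕ)) x t := by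
    intro m
    rw [hrec m x t, show Finset.Icc (-1 : ℤ) (d2 : ℤ) = insert (-1) (Finset.Icc 0 (d2 : ℤ)) by
      ext k; simp only [Finset.mem_Icc, Finset.mem_insert]; omega,
      Finset.sum_insert (by simp)]
    congr 1
    · rw [hαγ, sub_neg_eq_add]
    · rw [Fin.sum_univ_eq_sum_range
        (fun b => α ((d2 : ℤ) - (b : ℤ)) m t * ψ (m - (d2 : ℤ) + (b : ℤ)) x t) (d2 + 1)]
      refine Finset.sum_nbij' (fun k => ((d2 : ℤ) - k).toNat) (fun b => (d2 : ℤ) - b)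
        ?_ ?_ ?_ ?_ ?_
      · intro k hk; simp only [Finset.mem_Icc] at hk; simp only [Finset.mem_range]; omega
      · intro b hb; simp only [Finset.mem_range] at hb; simp only [Finset.mem_Icc]; omega
      · intro k hk; simp only [Finset.mem_Icc] at hk; beta_reduce; omega
      · intro b hb; simp only [Finset.mem_range] at hb; beta_reduce; omega
      · intro k hk
        simp only [Finset.mem_Icc] at hk
        have h1 : (((d2 : ℤ) - k).toNat : ℤ) = (d2 : ℤ) - k := by omega
        rw [h1]
        congr 2 <;> ring
  have hwin := aProd_mulVec d2 (fun a b => α a b t) (fun n => γ n t) (fun n => hγ n t)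
    x (fun n => ψ n x t) hrec' N
  funext i
  rw [hdef, UKNMat, sum_mulVec_aux, Finset.sum_apply]
  have hterm : ∀ j ∈ Finset.Icc 0 K,
      ((Matrix.diagonal (fun i : Fin (d2 + 1) => U (j : ℤ) (N - (d2 : ℤ) + ((i : ℕ) : ℤ)) t)
        * aProd d2 (fun a b => α a b t) (fun n => γ n t) N x j).mulVec
        (fun i : Fin (d2 + 1) => ψ (N - (d2 : ℤ) + ((i : ℕ) : ℤ)) x t)) i
      = U (j : ℤ) (N - (d2 : ℤ) + ((i : ℕ) : ℤ)) t *
          ψ (N - (d2 : ℤ) + ((i : ℕ) : ℤ) + (j : ℤ)) x t := by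
    intro j _
    rw [← Matrix.mulVec_mulVec, hwin j, Matrix.mulVec_diagonal]
  rw [Finset.sum_congr rfl hterm]
  refine Finset.sum_nbij' (fun k : ℤ => k.toNat) (fun b : ℕ => (b : ℤ)) ?_ ?_ ?_ ?_ ?_
  · intro k hk; simp only [Finset.mem_Icc] at hk ⊢; omega
  · intro b hb; simp only [Finset.mem_Icc] at hb ⊢; omega
  · intro k hk; simp only [Finset.mem_Icc] at hk; beta_reduce; omega
  · intro b _; beta_reduce; omega
  · intro k hk
    simp only [Finset.mem_Icc] at hk
    have : ((k.toNat : ℕ) : ℤ) = k := by omega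
    rw [this]
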